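/- Let 0 < α < 1 and let F be α-SR with differentiable density f and with finite mean, i.e. ∫₀^∞ (1−F(v)) dv < ∞. Then (α/(1+α)) · ∫₀^∞ (1−F(v)) dv ≤ ∫₀^∞ (1−F(v))² dv. -/

import Mathlib

open MeasureTheory Real Filter

open Topology

/-- The virtual valuation function `φ(v) = v − (1 − F(v))/f(v)`. -/
noncomputable def virtualValue (F f : ℝ → ℝ) (v : ℝ) : ℝ := v - (1 - F v) / f v

/-- The hazard rate `h(v) = f(v)/(1 − F(v))`. -/
noncomputable def hazardRate (F f : ℝ → ℝ) (v : ℝ) : ℝ := f v / (1 - F v)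

/-- `F` is the CDF of a continuous distribution supported on `[0, ∞)`,
with density `f = F'` that is positive wherever `F < 1`. -/
structure IsCDF (F f : ℝ → ℝ) : Prop where
  zero : F 0 = 0
  mono : Monotone F
  le_one : ∀ v, F v ≤ 1
  tendsto_one : Tendsto F atTop (nhds 1)
  hasDeriv : ∀ v, 0 ≤ v → HasDerivAt F (f v) v
  f_pos : ∀ v, 0 ≤ v → F v < 1 → 0 < f v

/-- `F` is `α`-strongly regular: `φ(y) − φ(x) ≥ α (y − x)` for all `x < y` in the support. -/
def IsAlphaSR (α : ℝ) (F f : ℝ → ℝ) : Prop :=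
  ∀ x y, 0 ≤ x → x < y → F y < 1 →
    virtualValue F f y - virtualValue F f x ≥ α * (y - x)

namespace SquareIntegralAux

/-- Mills ratio `(1 - F v)/f v`. -/
noncomputable def auxQ (F f : ℝ → ℝ) (v : ℝ) : ℝ := (1 - F v) / f v

lemma hasDerivAt_G {F f : ℝ → ℝ} (hcdf : IsCDF F f) {v : ℝ} (hv : 0 ≤ v) :
    HasDerivAt (fun y => 1 - F y) (-f v) v := by
  have h := (hasDerivAt_const v (1:ℝ)).sub (hcdf.hasDeriv v hv)
  rw [zero_sub] at h
  exact h

lemma diff_Q {F f : ℝ → ℝ} (hcdf : IsCDF F f) (hfd : ∀ v, 0 ≤ v → DifferentiableAt ℝ f v)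
    {v : ℝ} (hv : 0 ≤ v) (hFv : F v < 1) : DifferentiableAt ℝ (auxQ F f) v :=
  (hasDerivAt_G hcdf hv).differentiableAt.div (hfd v hv) (hcdf.f_pos v hv hFv).ne'

lemma derivQ_le {α : ℝ} {F f : ℝ → ℝ} (hcdf : IsCDF F f)
    (hfd : ∀ v, 0 ≤ v → DifferentiableAt ℝ f v) (hSR : IsAlphaSR α F f)
    {v w : ℝ} (hv : 0 ≤ v) (hvw : v < w) (hw : ∀ y, v < y → y < w → F y < 1)
    (hFv : F v < 1) : deriv (auxQ F f) v ≤ 1 - α := by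
  have hQ : HasDerivAt (auxQ F f) (deriv (auxQ F f) v) v :=
    (diff_Q hcdf hfd hv hFv).hasDerivAt
  have hφ : HasDerivAt (virtualValue F f) (1 - deriv (auxQ F f) v) v := by
    have := (hasDerivAt_id v).sub hQ
    exact this
  have htend : Tendsto (slope (virtualValue F f) v) (𝓝[>] v)
      (𝓝 (1 - deriv (auxQ F f) v)) :=
    (hasDerivAt_iff_tendsto_slope.mp hφ).mono_left
      (nhdsWithin_mono v (fun y hy => (ne_of_gt hy : y ≠ v)))
  have hev : ∀ᶠ y in 𝓝[>] v, α ≤ slope (virtualValue F f) v y := by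
    filter_upwards [Ioo_mem_nhdsGT_of_mem (Set.mem_Ico.mpr ⟨le_refl v, hvw⟩)] with y hy
    have hsr := hSR v y hv hy.1 (hw y hy.1 hy.2)
    rw [slope_def_field, le_div_iff₀ (by linarith [hy.1] : (0:ℝ) < y - v)]
    linarith
  have := ge_of_tendsto htend hev
  linarith

lemma S_anti {α : ℝ} {F f : ℝ → ℝ} (hα0 : 0 < α) (hα1 : α < 1) (hcdf : IsCDF F f)
    (hfd : ∀ v, 0 ≤ v → DifferentiableAt ℝ f v) (hSR : IsAlphaSR α F f)
    {B : ℝ} (hB : ∀ v, 0 ≤ v → v < B → F v < 1) :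
    AntitoneOn (fun v => auxQ F f v * (1 - F v) ^ (1 - α)) (Set.Ico 0 B) := by
  apply antitoneOn_of_deriv_nonpos (convex_Ico 0 B)
  · intro v hv
    have hFv := hB v hv.1 hv.2
    have hc1 : ContinuousAt (auxQ F f) v := (diff_Q hcdf hfd hv.1 hFv).continuousAt
    have hc2 : ContinuousAt (fun y => (1 - F y) ^ (1 - α)) v :=
      (hasDerivAt_G hcdf hv.1).continuousAt.rpow_const (Or.inr (by linarith))
    exact (hc1.mul hc2).continuousWithinAt
  · intro v hv
    rw [interior_Ico] at hv
    have hv0 : (0:ℝ) ≤ v := hv.1.le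
    have hFv := hB v hv0 hv.2
    have hc2 : DifferentiableAt ℝ (fun y => (1 - F y) ^ (1 - α)) v :=
      ((hasDerivAt_G hcdf hv0).rpow_const (Or.inl (by linarith : (1:ℝ) - F v ≠ 0))).differentiableAt
    exact ((diff_Q hcdf hfd hv0 hFv).mul hc2).differentiableWithinAt
  · intro v hv
    rw [interior_Ico] at hv
    have hv0 : (0:ℝ) ≤ v := hv.1.le
    have hFv := hB v hv0 hv.2
    have hGpos : 0 < 1 - F v := by linarith
    have hfpos := hcdf.f_pos v hv0 hFv
    have hQ : HasDerivAt (auxQ F f) (deriv (auxQ F f) v) v :=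
      (diff_Q hcdf hfd hv0 hFv).hasDerivAt
    have hGr : HasDerivAt (fun y => (1 - F y) ^ (1 - α))
        ((-f v) * (1 - α) * (1 - F v) ^ (1 - α - 1)) v :=
      (hasDerivAt_G hcdf hv0).rpow_const (Or.inl hGpos.ne')
    have hS : HasDerivAt (fun v => auxQ F f v * (1 - F v) ^ (1 - α))
        (deriv (auxQ F f) v * (1 - F v) ^ (1 - α) +
          auxQ F f v * ((-f v) * (1 - α) * (1 - F v) ^ (1 - α - 1))) v := hQ.mul hGr
    rw [hS.deriv]
    have hQf : auxQ F f v * f v = 1 - F v := by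
      rw [auxQ]; field_simp
    have hpow : (1 - F v) ^ (1 - α - 1) = (1 - F v) ^ (1 - α) / (1 - F v) := by
      rw [Real.rpow_sub hGpos, Real.rpow_one]
    have key : auxQ F f v * ((-f v) * (1 - α) * (1 - F v) ^ (1 - α - 1)) =
        -((1 - α) * (1 - F v) ^ (1 - α)) := by
      rw [hpow]
      rw [show auxQ F f v * ((-f v) * (1 - α) * ((1 - F v) ^ (1 - α) / (1 - F v))) =
        -((auxQ F f v * f v) * (1 - α) * ((1 - F v) ^ (1 - α) / (1 - F v))) by ring, hQf]
      field_simp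
    rw [key]
    have hd : deriv (auxQ F f) v ≤ 1 - α := by
      apply derivQ_le hcdf hfd hSR hv0 hv.2 _ hFv
      intro y hy1 hy2
      exact hB y (by linarith) hy2
    have hrnn : (0:ℝ) ≤ (1 - F v) ^ (1 - α) := Real.rpow_nonneg hGpos.le _
    nlinarith [mul_le_mul_of_nonneg_right hd hrnn]

lemma key_ineq {α : ℝ} {F f : ℝ → ℝ} (hα0 : 0 < α) (hα1 : α < 1) (hcdf : IsCDF F f)
    (hfd : ∀ v, 0 ≤ v → DifferentiableAt ℝ f v) (hSR : IsAlphaSR α F f)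
    {B T v₀ : ℝ} (hB : ∀ v, 0 ≤ v → v < B → F v < 1)
    (hT0 : 0 ≤ T) (hTB : T < B) (hv₀0 : 0 ≤ v₀) (hv₀B : v₀ < B)
    (hv₀ : 1 - F v₀ = α / (1 + α)) :
    (auxQ F f v₀ * (1 - F v₀) ^ (1 - α)) *
      (-(1 - F T) ^ (1 + α) / (1 + α) + (α / (1 + α)) * (1 - F T) ^ α / α) ≤
    ∫ v in (0:ℝ)..T, ((1 - F v) ^ 2 - (α / (1 + α)) * (1 - F v)) := by
  have hα1' : (0:ℝ) < 1 + α := by linarith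
  set c : ℝ := α / (1 + α) with hc
  have hcpos : 0 < c := div_pos hα0 hα1'
  have hclt : c < 1 := (div_lt_one hα1').mpr (by linarith)
  set A : ℝ → ℝ := fun v => -(1 - F v) ^ (1 + α) / (1 + α) + c * (1 - F v) ^ α / α with hA
  set ψ : ℝ → ℝ := fun v => f v * ((1 - F v) ^ (α - 1) * ((1 - F v) - c)) with hψ
  set S : ℝ → ℝ := fun v => auxQ F f v * (1 - F v) ^ (1 - α) with hS
  have hGpos : ∀ v ∈ Set.Icc (0:ℝ) T, 0 < 1 - F v := fun v hv => by
    have := hB v hv.1 (lt_of_le_of_lt hv.2 hTB); linarith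
  have hfpos : ∀ v ∈ Set.Icc (0:ℝ) T, 0 < f v := fun v hv =>
    hcdf.f_pos v hv.1 (by linarith [hGpos v hv])
  -- A has derivative ψ on [0, T]
  have hAderiv : ∀ v ∈ Set.Icc (0:ℝ) T, HasDerivAt A (ψ v) v := by
    intro v hv
    have hGp := hGpos v hv
    have h1 : HasDerivAt (fun y => (1 - F y) ^ (1 + α))
        ((-f v) * (1 + α) * (1 - F v) ^ (1 + α - 1)) v :=
      (hasDerivAt_G hcdf hv.1).rpow_const (Or.inl hGp.ne')
    have h2 : HasDerivAt (fun y => (1 - F y) ^ α)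
        ((-f v) * α * (1 - F v) ^ (α - 1)) v :=
      (hasDerivAt_G hcdf hv.1).rpow_const (Or.inl hGp.ne')
    have h3 : HasDerivAt A
        (-((-f v) * (1 + α) * (1 - F v) ^ (1 + α - 1)) / (1 + α) +
          c * ((-f v) * α * (1 - F v) ^ (α - 1)) / α) v :=
      (h1.neg.div_const (1 + α)).add ((h2.const_mul c).div_const α)
    convert h3 using 1
    have e1 : (1:ℝ) + α - 1 = α := by ring
    rw [e1]
    have hXY : (1 - F v) ^ (α - 1) * (1 - F v) = (1 - F v) ^ α := by
      rw [Real.rpow_sub hGp, Real.rpow_one]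
      field_simp
    show f v * ((1 - F v) ^ (α - 1) * (1 - F v - c)) =
      -(-f v * (1 + α) * (1 - F v) ^ α) / (1 + α) + c * (-f v * α * (1 - F v) ^ (α - 1)) / α
    rw [show f v * ((1 - F v) ^ (α - 1) * (1 - F v - c)) =
      (1 - F v) ^ (α - 1) * (1 - F v) * f v - c * (f v * (1 - F v) ^ (α - 1)) by ring]
    rw [hXY]
    field_simp
    ring
  have hGcont : ContinuousOn (fun v => 1 - F v) (Set.Icc (0:ℝ) T) := fun v hv =>
    ((hasDerivAt_G hcdf hv.1).continuousAt).continuousWithinAt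
  have hψcont : ContinuousOn ψ (Set.Icc (0:ℝ) T) := by
    intro v hv
    have hGp := hGpos v hv
    have c1 : ContinuousAt f v := (hfd v hv.1).continuousAt
    have c2 : ContinuousAt (fun y => (1 - F y) ^ (α - 1)) v :=
      ((hasDerivAt_G hcdf hv.1).continuousAt).rpow_const (Or.inl hGp.ne')
    have c3 : ContinuousAt (fun y => (1 - F y) - c) v :=
      ((hasDerivAt_G hcdf hv.1).continuousAt).sub continuousAt_const
    exact (c1.mul (c2.mul c3)).continuousWithinAt
  have hψint : IntervalIntegrable ψ volume 0 T := by
    apply ContinuousOn.intervalIntegrable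
    rwa [Set.uIcc_of_le hT0]
  have hFTC : ∫ v in (0:ℝ)..T, ψ v = A T - A 0 := by
    apply intervalIntegral.integral_eq_sub_of_hasDerivAt _ hψint
    intro x hx
    exact hAderiv x (by rwa [Set.uIcc_of_le hT0] at hx)
  have hA0 : A 0 = 0 := by
    rw [hA]
    simp only [hcdf.zero, sub_zero, Real.one_rpow]
    rw [hc]; field_simp; ring
  -- pointwise inequality
  have hSanti := S_anti hα0 hα1 hcdf hfd hSR hB
  have hpt : ∀ v ∈ Set.Icc (0:ℝ) T, S v₀ * ψ v ≤ (1 - F v) ^ 2 - c * (1 - F v) := by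
    intro v hv
    have hGp := hGpos v hv
    have hfp := hfpos v hv
    have h1 : (1 - F v) ^ (1 - α) * (1 - F v) ^ (α - 1) = 1 := by
      rw [← Real.rpow_add hGp]
      norm_num
    have h2 : auxQ F f v * f v = 1 - F v := by rw [auxQ]; field_simp
    have hSψ : S v * ψ v = (1 - F v) ^ 2 - c * (1 - F v) := by
      have e : S v * ψ v = (auxQ F f v * f v) *
          ((1 - F v) ^ (1 - α) * (1 - F v) ^ (α - 1)) * ((1 - F v) - c) := by
        rw [hS, hψ]; ring
      rw [e, h2, h1]; ring
    rw [← hSψ]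
    have hmemv : v ∈ Set.Ico (0:ℝ) B := ⟨hv.1, lt_of_le_of_lt hv.2 hTB⟩
    have hmemv₀ : v₀ ∈ Set.Ico (0:ℝ) B := ⟨hv₀0, hv₀B⟩
    have hrnn : (0:ℝ) ≤ (1 - F v) ^ (α - 1) := Real.rpow_nonneg hGp.le _
    rcases le_total v v₀ with hle | hle
    · have hSS : S v₀ ≤ S v := hSanti hmemv hmemv₀ hle
      have hGc : c ≤ 1 - F v := by
        rw [← hv₀]; have := hcdf.mono hle; linarith
      have hψnn : 0 ≤ ψ v := by
        rw [hψ]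
        exact mul_nonneg hfp.le (mul_nonneg hrnn (by linarith))
      exact mul_le_mul_of_nonneg_right hSS hψnn
    · have hSS : S v ≤ S v₀ := hSanti hmemv₀ hmemv hle
      have hGc : 1 - F v ≤ c := by
        rw [← hv₀]; have := hcdf.mono hle; linarith
      have hψnp : ψ v ≤ 0 := by
        rw [hψ]
        apply mul_nonpos_of_nonneg_of_nonpos hfp.le
        apply mul_nonpos_of_nonneg_of_nonpos hrnn (by linarith)
      exact mul_le_mul_of_nonpos_right hSS hψnp
  -- integrate
  have hint2 : IntervalIntegrable (fun v => (1 - F v) ^ 2 - c * (1 - F v)) volume 0 T := by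
    apply ContinuousOn.intervalIntegrable
    rw [Set.uIcc_of_le hT0]
    exact (hGcont.pow 2).sub (continuousOn_const.mul hGcont)
  have hint1 : IntervalIntegrable (fun v => S v₀ * ψ v) volume 0 T := hψint.const_mul _
  have hmono := intervalIntegral.integral_mono_on hT0 hint1 hint2 hpt
  rw [intervalIntegral.integral_const_mul, hFTC, hA0, sub_zero] at hmono
  exact hmono

lemma tendsto_A {α c : ℝ} (hα0 : 0 < α) {β : Type*} {l : Filter β} {G : β → ℝ}
    (hG : Tendsto G l (𝓝 0)) :
    Tendsto (fun T => -(G T) ^ (1 + α) / (1 + α) + c * (G T) ^ α / α) l (𝓝 0) := by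
  have e1 : Tendsto (fun x : ℝ => x ^ (1 + α)) (𝓝 0) (𝓝 0) := by
    have h := Real.continuousAt_rpow_const 0 (1 + α) (Or.inr (by linarith))
    rw [ContinuousAt, Real.zero_rpow (by linarith : (1:ℝ) + α ≠ 0)] at h
    exact h
  have e2 : Tendsto (fun x : ℝ => x ^ α) (𝓝 0) (𝓝 0) := by
    have h := Real.continuousAt_rpow_const 0 α (Or.inr hα0.le)
    rw [ContinuousAt, Real.zero_rpow hα0.ne'] at h
    exact h
  have := ((e1.comp hG).neg.div_const (1 + α)).add (((e2.comp hG).const_mul c).div_const α)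
  simpa using this

end SquareIntegralAux

open SquareIntegralAux in
theorem square_integral_bound (α : ℝ) (F f : ℝ → ℝ)
    (hα0 : 0 < α) (hα1 : α < 1)
    (hcdf : IsCDF F f)
    (hfd : ∀ v, 0 ≤ v → DifferentiableAt ℝ f v)
    (hSR : IsAlphaSR α F f)
    (hmean : IntegrableOn (fun v => 1 - F v) (Set.Ioi 0)) :
    (α / (1 + α)) * ∫ v in Set.Ioi (0 : ℝ), (1 - F v) ≤
      ∫ v in Set.Ioi (0 : ℝ), (1 - F v) ^ 2 := by
  have hα1' : (0:ℝ) < 1 + α := by linarith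
  set c : ℝ := α / (1 + α) with hc
  have hcpos : 0 < c := div_pos hα0 hα1'
  have hclt : c < 1 := (div_lt_one hα1').mpr (by linarith)
  have hGnn : ∀ v : ℝ, 0 ≤ 1 - F v := fun v => by linarith [hcdf.le_one v]
  have hGle1 : ∀ v : ℝ, 0 ≤ v → 1 - F v ≤ 1 := fun v hv => by
    have := hcdf.mono hv; rw [hcdf.zero] at this; linarith
  have hGcont : ∀ v : ℝ, 0 ≤ v → ContinuousAt F v := fun v hv =>
    (hcdf.hasDeriv v hv).continuousAt
  have hG2 : IntegrableOn (fun v => (1 - F v) ^ 2) (Set.Ioi (0:ℝ)) := by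
    apply Integrable.mono' hmean
    · apply ContinuousOn.aestronglyMeasurable _ measurableSet_Ioi
      intro v hv
      exact ((continuousAt_const.sub (hGcont v (le_of_lt hv))).pow 2).continuousWithinAt
    · refine (ae_restrict_iff' measurableSet_Ioi).mpr (ae_of_all _ ?_)
      intro v hv
      rw [Real.norm_eq_abs, abs_of_nonneg (by positivity)]
      nlinarith [hGnn v, hGle1 v (le_of_lt hv)]
  set h : ℝ → ℝ := fun v => (1 - F v) ^ 2 - c * (1 - F v) with hh
  have hInt : IntegrableOn h (Set.Ioi (0:ℝ)) := hG2.sub (hmean.const_mul c)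
  have hsplit : ∫ v in Set.Ioi (0:ℝ), h v =
      (∫ v in Set.Ioi (0:ℝ), (1 - F v) ^ 2) - c * ∫ v in Set.Ioi (0:ℝ), (1 - F v) := by
    rw [hh]
    rw [integral_sub hG2 (hmean.const_mul c), integral_const_mul]
  suffices hfin : 0 ≤ ∫ v in Set.Ioi (0:ℝ), h v by linarith [hsplit ▸ hfin]
  -- find v₀ with 1 - F v₀ = c
  have hev1 : ∀ᶠ v in atTop, 1 - c < F v :=
    hcdf.tendsto_one.eventually (eventually_gt_nhds (by linarith))
  obtain ⟨w, hw1, hw0⟩ := (hev1.and (eventually_ge_atTop (0:ℝ))).exists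
  have hcontIcc : ContinuousOn F (Set.Icc 0 w) := fun v hv =>
    (hGcont v hv.1).continuousWithinAt
  have hmem : (1 - c) ∈ Set.Icc (F 0) (F w) := by
    constructor
    · rw [hcdf.zero]; linarith
    · linarith
  obtain ⟨v₀, hv₀mem, hFv₀⟩ := intermediate_value_Icc hw0 hcontIcc hmem
  have hv₀0 : 0 ≤ v₀ := hv₀mem.1
  have hGv₀ : 1 - F v₀ = c := by rw [hFv₀]; ring
  have hFv₀lt : F v₀ < 1 := by rw [hFv₀]; linarith
  set S₀ : ℝ := auxQ F f v₀ * (1 - F v₀) ^ (1 - α) with hS₀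
  by_cases hcase : ∀ v : ℝ, 0 ≤ v → F v < 1
  · -- support is all of [0, ∞)
    have t1 : Tendsto (fun T => ∫ v in (0:ℝ)..T, h v) atTop
        (𝓝 (∫ v in Set.Ioi (0:ℝ), h v)) :=
      intervalIntegral_tendsto_integral_Ioi 0 hInt tendsto_id
    have tG : Tendsto (fun T : ℝ => 1 - F T) atTop (𝓝 0) := by
      have := (tendsto_const_nhds (x := (1:ℝ)) (f := atTop)).sub hcdf.tendsto_one
      simpa using this
    have t2 : Tendsto (fun T => S₀ *
        (-(1 - F T) ^ (1 + α) / (1 + α) + c * (1 - F T) ^ α / α)) atTop (𝓝 0) := by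
      have := (tendsto_A (c := c) hα0 tG).const_mul S₀
      simpa using this
    apply le_of_tendsto_of_tendsto t2 t1
    filter_upwards [eventually_ge_atTop (0:ℝ)] with T hT
    exact key_ineq hα0 hα1 hcdf hfd hSR (B := max T v₀ + 1)
      (fun v hv _ => hcase v hv) hT
      (lt_of_le_of_lt (le_max_left _ _) (lt_add_one _)) hv₀0
      (lt_of_le_of_lt (le_max_right _ _) (lt_add_one _)) (by rw [hGv₀, hc])
  · -- support is bounded
    push_neg at hcase
    obtain ⟨z, hz0, hz1⟩ := hcase
    set E := {v : ℝ | 0 ≤ v ∧ F v = 1} with hE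
    have hzE : z ∈ E := ⟨hz0, le_antisymm (hcdf.le_one z) hz1⟩
    have hEne : E.Nonempty := ⟨z, hzE⟩
    have hEbdd : BddBelow E := ⟨0, fun v hv => hv.1⟩
    set b := sInf E with hb
    have hb0 : 0 ≤ b := le_csInf hEne (fun v hv => hv.1)
    have hFb1' : ∀ y, b < y → F y = 1 := by
      intro y hy
      obtain ⟨e, heE, hey⟩ := exists_lt_of_csInf_lt hEne hy
      exact le_antisymm (hcdf.le_one y) (heE.2 ▸ hcdf.mono hey.le)
    have hFb : F b = 1 := by
      have hcb : Tendsto F (𝓝[>] b) (𝓝 (F b)) := (hGcont b hb0).continuousWithinAt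
      have h1 : Tendsto F (𝓝[>] b) (𝓝 1) := by
        apply Tendsto.congr' _ (tendsto_const_nhds (x := (1:ℝ)))
        filter_upwards [self_mem_nhdsWithin] with y hy
        exact (hFb1' y hy).symm
      exact tendsto_nhds_unique hcb h1
    have hbpos : 0 < b := by
      rcases hb0.lt_or_eq with hlt | heq
      · exact hlt
      · exfalso; rw [← heq, hcdf.zero] at hFb; norm_num at hFb
    have hltB : ∀ v, 0 ≤ v → v < b → F v < 1 := by
      intro v hv hvb
      rcases lt_or_ge (F v) 1 with h1 | h1
      · exact h1
      · exact absurd (csInf_le hEbdd ⟨hv, le_antisymm (hcdf.le_one v) h1⟩)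
          (not_le.mpr hvb)
    have hv₀b : v₀ < b := by
      by_contra hcon
      push_neg at hcon
      have := hcdf.mono hcon
      rw [hFb] at this
      linarith
    have hzero : Set.EqOn h (fun _ => (0:ℝ)) (Set.Ioi b) := by
      intro v hv
      have : F v = 1 := hFb1' v hv
      simp [hh, this]
    have hsplit2 : ∫ v in Set.Ioi (0:ℝ), h v = ∫ v in (0:ℝ)..b, h v := by
      rw [intervalIntegral.integral_of_le hb0]
      rw [← Set.Ioc_union_Ioi_eq_Ioi hb0]
      rw [setIntegral_union (Set.Ioc_disjoint_Ioi le_rfl) measurableSet_Ioi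
        (hInt.mono_set (by rw [← Set.Ioc_union_Ioi_eq_Ioi hb0]; exact Set.subset_union_left))
        (hInt.mono_set (by rw [← Set.Ioc_union_Ioi_eq_Ioi hb0]; exact Set.subset_union_right))]
      rw [setIntegral_congr_fun measurableSet_Ioi hzero]
      simp
    have hIcc : IntegrableOn h (Set.Icc 0 b) := by
      apply ContinuousOn.integrableOn_Icc
      intro v hv
      exact (((continuousAt_const.sub (hGcont v hv.1)).pow 2).sub
        (continuousAt_const.mul (continuousAt_const.sub (hGcont v hv.1)))).continuousWithinAt
    have hPcont : ContinuousOn (fun x => ∫ t in (0:ℝ)..x, h t) (Set.Icc 0 b) := by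
      have := intervalIntegral.continuousOn_primitive_interval
        (a := 0) (b := b) (μ := volume) (f := h) (by rwa [Set.uIcc_of_le hb0])
      rwa [Set.uIcc_of_le hb0] at this
    have hlne : (𝓝[Set.Ioo (0:ℝ) b] b).NeBot := by
      apply mem_closure_iff_nhdsWithin_neBot.mp
      rw [closure_Ioo (ne_of_lt hbpos)]
      exact Set.mem_Icc.mpr ⟨hb0, le_rfl⟩
    have tP : Tendsto (fun x => ∫ t in (0:ℝ)..x, h t) (𝓝[Set.Ioo (0:ℝ) b] b)
        (𝓝 (∫ t in (0:ℝ)..b, h t)) :=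
      (hPcont b (Set.mem_Icc.mpr ⟨hb0, le_rfl⟩)).mono_left
        (nhdsWithin_mono b Set.Ioo_subset_Icc_self)
    have tG : Tendsto (fun T : ℝ => 1 - F T) (𝓝[Set.Ioo (0:ℝ) b] b) (𝓝 0) := by
      have h1 : ContinuousAt (fun T => 1 - F T) b :=
        continuousAt_const.sub (hGcont b hb0)
      have h2 := h1.tendsto.mono_left (nhdsWithin_le_nhds (s := Set.Ioo (0:ℝ) b))
      rw [hFb] at h2
      simpa using h2
    have t2 : Tendsto (fun T => S₀ *
        (-(1 - F T) ^ (1 + α) / (1 + α) + c * (1 - F T) ^ α / α))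
        (𝓝[Set.Ioo (0:ℝ) b] b) (𝓝 0) := by
      have := (tendsto_A (c := c) hα0 tG).const_mul S₀
      simpa using this
    rw [hsplit2]
    apply le_of_tendsto_of_tendsto t2 tP
    filter_upwards [self_mem_nhdsWithin] with T hT
    exact key_ineq hα0 hα1 hcdf hfd hSR (B := b) hltB hT.1.le hT.2 hv₀0 hv₀b
      (by rw [hGv₀, hc])
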